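/- Let G be a topological monoid whose monoid of path components π₀(G) is a group, and let Y be a topological space with a continuous left G-action (associative and unital) such that there is a G-equivariant homotopy equivalence φ : G → Y (where G acts on itself by left multiplication). Then for every point y ∈ Y, the orbit map G → Y, g ↦ g·y, is a homotopy equivalence. -/

import Mathlib

open ContinuousMap

/-- Right multiplication by an element is a homotopy equivalence of a grouplike
topological monoid. -/
lemma rmul_homotopyEquiv {G : Type*} [TopologicalSpace G] [Monoid G] [ContinuousMul G]
    (hG : ∀ g : G, ∃ h : G, Joined (g * h) 1 ∧ Joined (h * g) 1) (a : G) :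
    ∃ e : ContinuousMap.HomotopyEquiv G G, ∀ g : G, e.toFun g = g * a := by
  obtain ⟨h, ⟨p⟩, ⟨q⟩⟩ := hG a
  let ra : C(G, G) := ⟨fun g => g * a, continuous_id.mul continuous_const⟩
  let rh : C(G, G) := ⟨fun g => g * h, continuous_id.mul continuous_const⟩
  have left : (rh.comp ra).Homotopic (ContinuousMap.id G) := by
    exact ⟨{ toFun := fun z => z.2 * p z.1
             continuous_toFun := continuous_snd.mul (p.continuous.comp continuous_fst)
             map_zero_left := fun g => by simp [ra, rh, mul_assoc]
             map_one_left := fun g => by simp }⟩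
  have right : (ra.comp rh).Homotopic (ContinuousMap.id G) := by
    exact ⟨{ toFun := fun z => z.2 * q z.1
             continuous_toFun := continuous_snd.mul (q.continuous.comp continuous_fst)
             map_zero_left := fun g => by simp [ra, rh, mul_assoc]
             map_one_left := fun g => by simp }⟩
  exact ⟨⟨ra, rh, left, right⟩, fun g => rfl⟩

/-- Let `G` be a grouplike topological monoid (every path component invertible in
`π₀ G`) acting continuously on a space `Y`, and suppose there is a `G`-equivariant
homotopy equivalence `φ : G → Y`.  Then for every `y : Y` the orbit map `g ↦ g • y`
is a homotopy equivalence `G → Y`. -/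
theorem orbit_map_homotopyEquiv
    {G Y : Type*} [TopologicalSpace G] [Monoid G] [ContinuousMul G]
    [TopologicalSpace Y] [MulAction G Y] [ContinuousSMul G Y]
    (hG : ∀ g : G, ∃ h : G, Joined (g * h) 1 ∧ Joined (h * g) 1)
    (φ : ContinuousMap.HomotopyEquiv G Y)
    (hφ : ∀ g x : G, φ.toFun (g * x) = g • φ.toFun x) (y : Y) :
    ∃ e : ContinuousMap.HomotopyEquiv G Y, ∀ g : G, e.toFun g = g • y := by
  classical
  set x₀ : G := φ.invFun y with hx₀
  obtain ⟨R, hR⟩ := rmul_homotopyEquiv hG x₀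
  let E : ContinuousMap.HomotopyEquiv G Y := R.trans φ
  have hE : ∀ g : G, E.toFun g = g • φ.toFun x₀ := by
    intro g
    show φ.toFun (R.toFun g) = _
    rw [hR, hφ]
  -- path from φ (φ.invFun y) to y
  obtain ⟨H⟩ := φ.right_inv
  let p : Path (φ.toFun x₀) y := H.evalAt y
  let orbit : C(G, Y) := ⟨fun g => g • y, continuous_id.smul continuous_const⟩
  have K : ContinuousMap.Homotopic E.toFun orbit := by
    exact ⟨{ toFun := fun z => z.2 • p z.1
             continuous_toFun := continuous_snd.smul (p.continuous.comp continuous_fst)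
             map_zero_left := fun g => by simp [p, hE]; exact congrArg (g • ·) (H.evalAt y).source
             map_one_left := fun g => by simp [p, orbit]; exact congrArg (g • ·) (H.evalAt y).target }⟩
  refine ⟨⟨orbit, E.invFun, ?_, ?_⟩, fun g => rfl⟩
  · exact ((ContinuousMap.Homotopic.comp (ContinuousMap.Homotopic.refl E.invFun) K.symm).trans E.left_inv)
  · exact ((ContinuousMap.Homotopic.comp K.symm (ContinuousMap.Homotopic.refl E.invFun)).trans E.right_inv)
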